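/- (Bizley's formula) Let a and b be positive integers with gcd(a,b) = 1, and for j ≥ 1 set φ_j := (1/(j(a+b)))·binom(j(a+b), ja) ∈ ℚ. Then, as formal power series over ℚ in the variable t, 1 + Σ_{d≥1} |D_{da, db}| t^d = exp( Σ_{j≥1} φ_j t^j ). -/

import Mathlib

/-- The number of `(a,b)`-Dyck paths: lattice paths from `(0,a)` to `(b,0)` with unit
south and east steps staying weakly below the segment joining these points, encoded as
weakly increasing sequences `c_1 ≤ … ≤ c_{a-1}` of naturals with `c_l ≤ ⌊b*l/a⌋`. -/
noncomputable def dyckCount (a b : ℕ) : ℕ :=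
  Nat.card {c : Fin (a - 1) → ℕ //
    Monotone c ∧ ∀ l : Fin (a - 1), c l ≤ b * (l.1 + 1) / a}

/-- The exponential `exp S = Σ_{m≥0} S^m / m!` of a formal power series `S`
(intended for `S` with zero constant term, in which case the `n`-th coefficient
only depends on the terms `S^m / m!` with `m ≤ n`). -/
noncomputable def expOf (S : PowerSeries ℚ) : PowerSeries ℚ :=
  PowerSeries.mk fun d =>
    PowerSeries.coeff (R := ℚ) d (∑ m ∈ Finset.range (d + 1), (m.factorial : ℚ)⁻¹ • S ^ m)

open scoped Classical

namespace Bizley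

/-- weight of a step: `true` (south step) has weight `b`, `false` (east step) `-a`. -/
def step (a b : ℕ) : Bool → ℤ
  | true => (b : ℤ)
  | false => -(a : ℤ)

/-- total weight of a word -/
def wt (a b : ℕ) (l : List Bool) : ℤ := (l.map (step a b)).sum

/-- Dyck condition: all prefixes have nonnegative weight. -/
def Ok (a b : ℕ) (l : List Bool) : Prop := ∀ k, 0 ≤ wt a b (l.take k)

@[simp] lemma wt_nil (a b : ℕ) : wt a b [] = 0 := rfl

lemma wt_append (a b : ℕ) (l₁ l₂ : List Bool) :
    wt a b (l₁ ++ l₂) = wt a b l₁ + wt a b l₂ := by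
  simp [wt]

lemma wt_cons (a b : ℕ) (x : Bool) (l : List Bool) :
    wt a b (x :: l) = step a b x + wt a b l := by
  simp [wt]

lemma wt_rotate (a b : ℕ) (l : List Bool) (n : ℕ) :
    wt a b (l.rotate n) = wt a b l := by
  unfold wt
  exact List.Perm.sum_eq ((l.rotate_perm n).map _)

lemma wt_eq (a b : ℕ) (l : List Bool) :
    wt a b l = (b : ℤ) * l.count true - (a : ℤ) * l.count false := by
  induction l with
  | nil => simp
  | cons x t ih =>
    cases x <;> simp [wt_cons, ih, step, List.count_cons] <;> ring

lemma count_true_add_count_false (l : List Bool) :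
    l.count true + l.count false = l.length := by
  induction l with
  | nil => simp
  | cons x t ih =>
    cases x <;> simp only [List.count_cons, List.length_cons, ← ih] <;> simp <;> omega

/-- all words of length n -/
def allW : ℕ → Finset (List Bool)
  | 0 => {[]}
  | n + 1 => ((allW n).image (List.cons true)) ∪ ((allW n).image (List.cons false))

lemma mem_allW {n : ℕ} {l : List Bool} : l ∈ allW n ↔ l.length = n := by
  induction n generalizing l with
  | zero => simp [allW, List.length_eq_zero_iff]
  | succ n ih =>
    cases l with
    | nil => simp [allW, ih]
    | cons x t =>
      cases x <;> simp [allW, ih]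

lemma card_filter_count (N K : ℕ) :
    ((allW N).filter (fun l => l.count true = K)).card = N.choose K := by
  induction N generalizing K with
  | zero =>
    cases K with
    | zero =>
      rw [allW]
      rw [Finset.filter_singleton]
      simp
    | succ K =>
      rw [allW]
      rw [Finset.filter_singleton]
      simp
  | succ N ih =>
    have hdisj : Disjoint ((allW N).image (List.cons true))
        ((allW N).image (List.cons false)) := by
      simp only [Finset.disjoint_left, Finset.mem_image]
      rintro x ⟨l, -, rfl⟩ ⟨l', -, h⟩
      exact absurd (List.head_eq_of_cons_eq h.symm) (by simp)
    have hinj₁ : Set.InjOn (List.cons true) (allW N) := fun x _ y _ h => by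
      simpa using h
    have hinj₂ : Set.InjOn (List.cons false) (allW N) := fun x _ y _ h => by
      simpa using h
    rw [allW, Finset.filter_union, Finset.card_union_of_disjoint
        (Finset.disjoint_filter_filter hdisj)]
    rw [Finset.filter_image, Finset.filter_image,
      Finset.card_image_of_injOn (hinj₁.mono (Finset.filter_subset _ _)),
      Finset.card_image_of_injOn (hinj₂.mono (Finset.filter_subset _ _))]
    cases K with
    | zero =>
      simp only [List.count_cons]
      simp [ih]
    | succ K =>
      have h1 : (fun l : List Bool => (true :: l).count true = K + 1)
          = fun l => l.count true = K := by
        funext l; simp [List.count_cons]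
      have h2 : (fun l : List Bool => (false :: l).count true = K + 1)
          = fun l => l.count true = K + 1 := by
        funext l; simp [List.count_cons]
      simp only [h1, h2, ih, Nat.choose_succ_succ, Nat.add_comm]


/-- balanced words of size j -/
noncomputable def wd (a b j : ℕ) : Finset (List Bool) :=
  (allW (j*(a+b))).filter (fun l => wt a b l = 0)

/-- Dyck words of size j -/
noncomputable def dy (a b j : ℕ) : Finset (List Bool) :=
  (allW (j*(a+b))).filter (fun l => wt a b l = 0 ∧ Ok a b l)

lemma wt_eq' (a b : ℕ) (l : List Bool) :
    wt a b l = ((a : ℤ) + b) * l.count true - (a : ℤ) * l.length := by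
  rw [wt_eq, ← count_true_add_count_false l]
  push_cast
  ring

lemma wt_eq_zero_iff {a b : ℕ} (hab : 0 < a + b) {j : ℕ} {l : List Bool}
    (hl : l.length = j * (a + b)) : wt a b l = 0 ↔ l.count true = j * a := by
  rw [wt_eq', hl]
  have hab' : ((a : ℤ) + b) ≠ 0 := by
    have : (0 : ℤ) < (a : ℤ) + b := by exact_mod_cast hab
    omega
  constructor
  · intro hz
    have h2 : ((a : ℤ) + b) * l.count true = ((a:ℤ) + b) * (j * a) := by push_cast; push_cast at hz; linarith
    have := mul_left_cancel₀ hab' h2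
    exact_mod_cast this
  · intro hc; rw [hc]; push_cast; ring

lemma card_wd {a b : ℕ} (hab : 0 < a + b) (j : ℕ) :
    (wd a b j).card = (j * (a + b)).choose (j * a) := by
  rw [← card_filter_count (j*(a+b)) (j*a), wd]
  congr 1
  apply Finset.filter_congr
  intro l hl
  rw [mem_allW] at hl
  exact wt_eq_zero_iff hab hl

lemma length_of_mem_wd {a b j : ℕ} {l : List Bool} (h : l ∈ wd a b j) :
    l.length = j * (a + b) := by
  rw [wd, Finset.mem_filter, mem_allW] at h; exact h.1

lemma wt_of_mem_wd {a b j : ℕ} {l : List Bool} (h : l ∈ wd a b j) :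
    wt a b l = 0 := by
  rw [wd, Finset.mem_filter] at h; exact h.2

lemma mem_wd_iff {a b j : ℕ} {l : List Bool} :
    l ∈ wd a b j ↔ l.length = j * (a + b) ∧ wt a b l = 0 := by
  rw [wd, Finset.mem_filter, mem_allW]

lemma mem_dy_iff {a b j : ℕ} {l : List Bool} :
    l ∈ dy a b j ↔ l.length = j * (a + b) ∧ wt a b l = 0 ∧ Ok a b l := by
  rw [dy, Finset.mem_filter, mem_allW]

lemma dy_zero (a b : ℕ) : dy a b 0 = {[]} := by
  ext l
  rw [mem_dy_iff]
  simp only [Finset.mem_singleton, Nat.zero_mul, List.length_eq_zero_iff]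
  constructor
  · rintro ⟨rfl, -⟩; rfl
  · rintro rfl; exact ⟨rfl, rfl, fun k => by simp⟩

/-- divisibility of the length of a balanced word -/
lemma dvd_length_of_wt_zero {a b : ℕ} (hab : Nat.Coprime (a + b) a) {l : List Bool}
    (hl : wt a b l = 0) : (a + b) ∣ l.length := by
  have h1 : ((a : ℤ) + b) * l.count true = (a : ℤ) * l.length := by
    have := wt_eq' a b l; omega
  have h2 : (a + b) * l.count true = a * l.length := by exact_mod_cast h1
  exact hab.dvd_of_dvd_mul_left ⟨l.count true, h2.symm⟩

/-- prefix weight of a rotation, first regime -/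
lemma wt_take_rotate_low (a b : ℕ) (l : List Bool) {n t : ℕ} (hn : n ≤ l.length)
    (ht : t ≤ l.length - n) :
    wt a b ((l.rotate n).take t) = wt a b (l.take (n + t)) - wt a b (l.take n) := by
  rw [List.rotate_eq_drop_append_take hn, List.take_append]
  have hlen : (l.drop n).length = l.length - n := List.length_drop
  have : t - (l.drop n).length = 0 := by omega
  rw [this, List.take_zero, List.append_nil]
  rw [List.take_add, wt_append]
  ring

/-- prefix weight of a rotation, second regime -/
lemma wt_take_rotate_high (a b : ℕ) (l : List Bool) {n t : ℕ} (hn : n ≤ l.length)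
    (ht1 : l.length - n ≤ t) (ht2 : t ≤ l.length) :
    wt a b ((l.rotate n).take t) =
      wt a b l - wt a b (l.take n) + wt a b (l.take (t - (l.length - n))) := by
  rw [List.rotate_eq_drop_append_take hn, List.take_append]
  have hlen : (l.drop n).length = l.length - n := List.length_drop
  rw [hlen]
  have h1 : (l.drop n).take t = l.drop n := List.take_of_length_le (by omega)
  have h2 : (l.take n).take (t - (l.length - n)) = l.take (t - (l.length - n)) := by
    rw [List.take_take]
    congr 1
    omega
  rw [h1, h2, wt_append]
  have h3 : wt a b l = wt a b (l.take n) + wt a b (l.drop n) := by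
    rw [← wt_append, List.take_append_drop]
  omega


/-- the first return (prefix of weight zero) strictly after position `k` -/
noncomputable def ret (a b : ℕ) (w : List Bool) (k : ℕ) : ℕ :=
  sInf {t | k < t ∧ wt a b (w.take t) = 0}

/-- the first position in `[1, length]` where the prefix weight is minimal -/
noncomputable def pm (a b : ℕ) (Q : List Bool) : ℕ :=
  sInf {t | 1 ≤ t ∧ t ≤ Q.length ∧
    ∀ s, 1 ≤ s → s ≤ Q.length → wt a b (Q.take t) ≤ wt a b (Q.take s)}

section retpm

variable {a b : ℕ} {w : List Bool} {k : ℕ}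

lemma ret_set_nonempty (hw : wt a b w = 0) (hk : k < w.length) :
    {t | k < t ∧ wt a b (w.take t) = 0}.Nonempty :=
  ⟨w.length, hk, by rw [List.take_length]; exact hw⟩

lemma ret_mem (hw : wt a b w = 0) (hk : k < w.length) :
    k < ret a b w k ∧ wt a b (w.take (ret a b w k)) = 0 :=
  Nat.sInf_mem (ret_set_nonempty hw hk)

lemma ret_le (hw : wt a b w = 0) (hk : k < w.length) : ret a b w k ≤ w.length :=
  Nat.sInf_le ⟨hk, by rw [List.take_length]; exact hw⟩

lemma ret_min (hw : wt a b w = 0) (hk : k < w.length) {t : ℕ} (h1 : k < t)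
    (h2 : t < ret a b w k) : wt a b (w.take t) ≠ 0 := by
  intro h0
  exact absurd ⟨h1, h0⟩ (Nat.notMem_of_lt_sInf h2)

lemma ret_eq_of (hw : wt a b w = 0) (hk : k < w.length) {r : ℕ}
    (h1 : k < r) (h2 : wt a b (w.take r) = 0)
    (h3 : ∀ t, k < t → t < r → wt a b (w.take t) ≠ 0) : ret a b w k = r := by
  refine le_antisymm (Nat.sInf_le ⟨h1, h2⟩) ?_
  by_contra hlt
  push_neg at hlt
  obtain ⟨hr1, hr2⟩ := ret_mem hw hk
  exact h3 _ hr1 hlt hr2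

variable {Q : List Bool}

lemma pm_set_nonempty (hQ : 1 ≤ Q.length) :
    {t | 1 ≤ t ∧ t ≤ Q.length ∧
      ∀ s, 1 ≤ s → s ≤ Q.length → wt a b (Q.take t) ≤ wt a b (Q.take s)}.Nonempty := by
  obtain ⟨t, ht, hmin⟩ := Finset.exists_min_image (Finset.Icc 1 Q.length)
    (fun t => wt a b (Q.take t)) ⟨1, by simp [hQ]⟩
  rw [Finset.mem_Icc] at ht
  exact ⟨t, ht.1, ht.2, fun s hs1 hs2 => hmin s (Finset.mem_Icc.mpr ⟨hs1, hs2⟩)⟩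

lemma pm_mem (hQ : 1 ≤ Q.length) :
    1 ≤ pm a b Q ∧ pm a b Q ≤ Q.length ∧
      ∀ s, 1 ≤ s → s ≤ Q.length → wt a b (Q.take (pm a b Q)) ≤ wt a b (Q.take s) :=
  Nat.sInf_mem (pm_set_nonempty hQ)

/-- strict minimality before `pm` -/
lemma pm_strict (hQ : 1 ≤ Q.length) {s : ℕ} (hs1 : 1 ≤ s) (hs2 : s < pm a b Q) :
    wt a b (Q.take (pm a b Q)) < wt a b (Q.take s) := by
  have hns : s ∉ {t | 1 ≤ t ∧ t ≤ Q.length ∧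
      ∀ s', 1 ≤ s' → s' ≤ Q.length → wt a b (Q.take t) ≤ wt a b (Q.take s')} :=
    Nat.notMem_of_lt_sInf hs2
  have hsle : s ≤ Q.length := le_trans (le_of_lt hs2) (pm_mem hQ).2.1
  simp only [Set.mem_setOf_eq, not_and, not_forall] at hns
  obtain ⟨s', hs'1, hs'2, hlt⟩ := hns hs1 hsle
  push_neg at hlt
  calc wt a b (Q.take (pm a b Q)) ≤ wt a b (Q.take s') := (pm_mem hQ).2.2 s' hs'1 hs'2
    _ < wt a b (Q.take s) := hlt

end retpm


section helpers

variable {a b : ℕ}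

lemma wt_take_add (w : List Bool) (r t : ℕ) :
    wt a b (w.take (r + t)) = wt a b (w.take r) + wt a b ((w.drop r).take t) := by
  rw [List.take_add, wt_append]

lemma wt_take_append_left {P D : List Bool} {t : ℕ} (ht : t ≤ P.length) :
    wt a b ((P ++ D).take t) = wt a b (P.take t) := by
  rw [List.take_append]
  have : t - P.length = 0 := by omega
  rw [this, List.take_zero, List.append_nil]

lemma ok_drop {w : List Bool} (hok : Ok a b w) {r : ℕ}
    (hr : wt a b (w.take r) = 0) : Ok a b (w.drop r) := by
  intro t
  have h1 := wt_take_add (a := a) (b := b) w r t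
  have h2 := hok (r + t)
  omega

lemma ok_append {P D : List Bool} (hP : Ok a b P) (hPwt : wt a b P = 0)
    (hD : Ok a b D) : Ok a b (P ++ D) := by
  intro t
  rw [List.take_append, wt_append]
  rcases le_or_gt t P.length with h | h
  · have : t - P.length = 0 := by omega
    rw [this, List.take_zero]
    simpa using hP t
  · have : P.take t = P := List.take_of_length_le (le_of_lt h)
    rw [this, hPwt]
    simpa using hD (t - P.length)

lemma ok_take {w : List Bool} (hok : Ok a b w) (r : ℕ) : Ok a b (w.take r) := by
  intro t
  rw [List.take_take]
  exact hok _

/-- the rotation of a balanced word to its first minimum is a Dyck word -/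
lemma ok_rotate_pm {Q : List Bool} (hQ : 1 ≤ Q.length) (hwt : wt a b Q = 0) :
    Ok a b (Q.rotate (pm a b Q)) := by
  obtain ⟨hp1, hp2, hmin⟩ := pm_mem (a := a) (b := b) hQ
  set p := pm a b Q with hp
  intro t
  rcases le_or_gt Q.length t with h | h
  · rw [List.take_of_length_le (by rw [List.length_rotate]; exact h), wt_rotate, hwt]
  · rcases le_or_gt t (Q.length - p) with h2 | h2
    · rw [wt_take_rotate_low a b Q hp2 h2]
      have := hmin (p + t) (by omega) (by omega)
      omega
    · rw [wt_take_rotate_high a b Q hp2 (by omega) (by omega), hwt]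
      have := hmin (t - (Q.length - p)) (by omega) (by omega)
      omega

/-- prefixes of the pm-rotation strictly between `length - pm` and `length`
have strictly positive weight -/
lemma rotate_pm_pos {Q : List Bool} (hQ : 1 ≤ Q.length) (hwt : wt a b Q = 0)
    {t : ℕ} (h1 : Q.length - pm a b Q < t) (h2 : t < Q.length) :
    0 < wt a b ((Q.rotate (pm a b Q)).take t) := by
  obtain ⟨hp1, hp2, hmin⟩ := pm_mem (a := a) (b := b) hQ
  rw [wt_take_rotate_high a b Q hp2 (le_of_lt h1) (le_of_lt h2), hwt]
  have := pm_strict (a := a) (b := b) hQ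
    (s := t - (Q.length - pm a b Q)) (by omega) (by omega)
  omega

end helpers


section main

variable {a b : ℕ}

/-- backward map: from `(Q, D)` build the marked Dyck word, and compute its first
return after the mark. -/
lemma backward_spec (hab : 0 < a + b) {j d : ℕ} {Q D : List Bool}
    (hj1 : 1 ≤ j) (hjd : j ≤ d) (hQ : Q ∈ wd a b j) (hD : D ∈ dy a b (d - j)) :
    (Q.rotate (pm a b Q) ++ D) ∈ dy a b d ∧
      (Q.length - pm a b Q) < d * (a + b) ∧
      ret a b (Q.rotate (pm a b Q) ++ D) (Q.length - pm a b Q) = Q.length := by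
  obtain ⟨hQlen, hQwt⟩ := mem_wd_iff.mp hQ
  obtain ⟨hDlen, hDwt, hDok⟩ := mem_dy_iff.mp hD
  have hr1 : 1 ≤ Q.length := by rw [hQlen]; exact Nat.one_le_iff_ne_zero.mpr (by positivity)
  obtain ⟨hp1, hp2, hmin⟩ := pm_mem (a := a) (b := b) hr1
  set p := pm a b Q with hp
  set P := Q.rotate p with hP
  have hPlen : P.length = Q.length := List.length_rotate Q p
  have hPwt : wt a b P = 0 := by rw [hP, wt_rotate]; exact hQwt
  have hPok : Ok a b P := ok_rotate_pm hr1 hQwt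
  have hwdy : (P ++ D) ∈ dy a b d := by
    rw [mem_dy_iff]
    refine ⟨?_, ?_, ok_append hPok hPwt hDok⟩
    · rw [List.length_append, hPlen, hQlen, hDlen]
      have : j * (a + b) + (d - j) * (a + b) = d * (a + b) := by
        rw [← Nat.add_mul]
        congr 1
        omega
      exact this
    · rw [wt_append, hPwt, hDwt]; ring
  have hklt : Q.length - p < d * (a + b) := by
    have : Q.length ≤ d * (a + b) := by
      rw [hQlen]; exact Nat.mul_le_mul_right _ hjd
    omega
  refine ⟨hwdy, hklt, ?_⟩
  obtain ⟨hwlen, hwwt, hwok⟩ := mem_dy_iff.mp hwdy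
  apply ret_eq_of hwwt (by omega)
  · omega
  · have : (P ++ D).take Q.length = P := by
      rw [← hPlen, List.take_left]
    rw [this]; exact hPwt
  · intro t ht1 ht2
    have htP : wt a b ((P ++ D).take t) = wt a b (P.take t) :=
      wt_take_append_left (by omega)
    rw [htP]
    have h2 := rotate_pm_pos hr1 hQwt (t := t) (by omega) (by omega)
    rw [← hp, ← hP] at h2
    omega

/-- forward map: identify the first minimum of the rotated prefix. -/
lemma forward_pm {d : ℕ} {w : List Bool} {k : ℕ}
    (hw : w ∈ dy a b d) (hk : k < w.length)
    (hr2 : wt a b (w.take (ret a b w k)) = 0) :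
    pm a b ((w.take (ret a b w k)).rotate k) = ret a b w k - k := by
  obtain ⟨hwlen, hwwt, hwok⟩ := mem_dy_iff.mp hw
  obtain ⟨hk1, -⟩ := ret_mem hwwt hk
  have hr3 : ret a b w k ≤ w.length := ret_le hwwt hk
  set r := ret a b w k with hrdef
  set P₀ := w.take r with hP₀
  have hP₀len : P₀.length = r := by
    rw [hP₀, List.length_take]; omega
  have hgP₀ : ∀ t, wt a b (P₀.take t) = wt a b (w.take (min t r)) := by
    intro t; rw [hP₀, List.take_take]
  set Q := P₀.rotate k with hQ
  have hQlen : Q.length = r := by rw [hQ, List.length_rotate, hP₀len]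
  -- value of g_Q at r - k
  have hkr : k ≤ r := le_of_lt hk1
  have hval : wt a b (Q.take (r - k)) = - wt a b (w.take k) := by
    rw [hQ, wt_take_rotate_low a b P₀ (by omega) (by omega)]
    have h1 : k + (r - k) = r := by omega
    rw [h1, hgP₀, hgP₀, min_self, Nat.min_eq_left hkr, hr2]
    ring
  -- minimality of g_Q at r - k
  have hminval : ∀ s, 1 ≤ s → s ≤ r → - wt a b (w.take k) ≤ wt a b (Q.take s) := by
    intro s hs1 hs2
    rcases le_or_gt s (r - k) with h | h
    · rw [hQ, wt_take_rotate_low a b P₀ (by omega) (by omega), hgP₀, hgP₀,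
        Nat.min_eq_left (by omega : k + s ≤ r), Nat.min_eq_left hkr]
      have := hwok (k + s)
      omega
    · rw [hQ, wt_take_rotate_high a b P₀ (by omega) (by omega) (by omega), hgP₀, hgP₀]
      have hwtP₀ : wt a b P₀ = 0 := hr2
      rw [hwtP₀, Nat.min_eq_left hkr, hP₀len,
        Nat.min_eq_left (by omega : s - (r - k) ≤ r)]
      have := hwok (s - (r - k))
      omega
  -- no earlier minimum
  have hnone : ∀ s, 1 ≤ s → s < r - k →
      ¬ (∀ s', 1 ≤ s' → s' ≤ Q.length → wt a b (Q.take s) ≤ wt a b (Q.take s')) := by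
    intro s hs1 hs2 hmin
    have h1 : wt a b (Q.take s) ≤ wt a b (Q.take (r - k)) :=
      hmin (r - k) (by omega) (by omega)
    rw [hval] at h1
    have h2 : wt a b (Q.take s) = wt a b (w.take (k + s)) - wt a b (w.take k) := by
      rw [hQ, wt_take_rotate_low a b P₀ (by omega) (by omega), hgP₀, hgP₀,
        Nat.min_eq_left (by omega : k + s ≤ r), Nat.min_eq_left hkr]
    have h3 := hwok (k + s)
    have h4 : wt a b (w.take (k + s)) = 0 := by omega
    exact ret_min hwwt hk (by omega) (by omega) h4
  -- conclude
  have hmem : (r - k) ∈ {t | 1 ≤ t ∧ t ≤ Q.length ∧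
      ∀ s, 1 ≤ s → s ≤ Q.length → wt a b (Q.take t) ≤ wt a b (Q.take s)} := by
    refine ⟨by omega, by omega, ?_⟩
    intro s hs1 hs2
    rw [hval]
    exact hminval s hs1 (by omega)
  refine le_antisymm (Nat.sInf_le hmem) ?_
  by_contra hlt
  push_neg at hlt
  obtain ⟨hq1, hq2, hq3⟩ := Nat.sInf_mem (Set.nonempty_of_mem hmem)
  exact hnone _ hq1 hlt hq3

end main


section count

variable {a b : ℕ}

/-- data extracted from the forward map -/
lemma forward_spec (hco : Nat.Coprime (a + b) a) (hab : 0 < a + b) {d : ℕ}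
    {w : List Bool} {k : ℕ} (hw : w ∈ dy a b d) (hk : k < d * (a + b)) :
    1 ≤ ret a b w k / (a + b) ∧ ret a b w k / (a + b) ≤ d ∧
      ret a b w k = (ret a b w k / (a + b)) * (a + b) := by
  obtain ⟨hwlen, hwwt, hwok⟩ := mem_dy_iff.mp hw
  have hk' : k < w.length := by omega
  obtain ⟨hr1, hr2⟩ := ret_mem hwwt hk'
  have hr3 : ret a b w k ≤ w.length := ret_le hwwt hk'
  have hdvd : (a + b) ∣ ret a b w k := by
    have := dvd_length_of_wt_zero hco hr2
    rwa [List.length_take, Nat.min_eq_left hr3] at this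
  have heq : ret a b w k = (ret a b w k / (a + b)) * (a + b) :=
    (Nat.div_mul_cancel hdvd).symm
  refine ⟨?_, ?_, heq⟩
  · rcases Nat.eq_zero_or_pos (ret a b w k / (a + b)) with h | h
    · rw [h, Nat.zero_mul] at heq; omega
    · exact h
  · have : (ret a b w k / (a + b)) * (a + b) ≤ d * (a + b) := by omega
    exact Nat.le_of_mul_le_mul_right this hab

/-- the cycle lemma counting identity -/
lemma key_identity (ha : 0 < a) (hco : Nat.Coprime (a + b) a) (d : ℕ) :
    (dy a b d).card * (d * (a + b)) =
      ∑ j ∈ Finset.Icc 1 d, (j * (a + b)).choose (j * a) * (dy a b (d - j)).card := by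
  have hab : 0 < a + b := by omega
  have h1 : (dy a b d).card * (d * (a + b)) =
      ((dy a b d) ×ˢ Finset.range (d * (a + b))).card := by
    rw [Finset.card_product, Finset.card_range]
  rw [h1]
  rw [Finset.card_eq_sum_card_fiberwise
    (f := fun p : List Bool × ℕ => ret a b p.1 p.2 / (a + b)) (t := Finset.Icc 1 d) ?hmap]
  case hmap =>
    rintro ⟨w, k⟩ hp
    rw [Finset.mem_coe, Finset.mem_product, Finset.mem_range] at hp
    obtain ⟨h1, h2, -⟩ := forward_spec hco hab hp.1 hp.2
    exact Finset.mem_Icc.mpr ⟨h1, h2⟩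
  refine Finset.sum_congr rfl fun j hj => ?_
  rw [Finset.mem_Icc] at hj
  rw [← card_wd hab j, ← Finset.card_product]
  refine Finset.card_bij'
    (fun p _ => ((p.1.take (ret a b p.1 p.2)).rotate p.2, p.1.drop (ret a b p.1 p.2)))
    (fun q _ => (q.1.rotate (pm a b q.1) ++ q.2, q.1.length - pm a b q.1))
    ?hi ?hjj ?li ?ri
  case hi =>
    rintro ⟨w, k⟩ hp
    dsimp only at hp ⊢
    rw [Finset.mem_filter, Finset.mem_product, Finset.mem_range] at hp
    dsimp only at hp
    obtain ⟨⟨hw, hk⟩, hfib⟩ := hp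
    obtain ⟨-, -, heq⟩ := forward_spec hco hab hw hk
    rw [hfib] at heq
    obtain ⟨hwlen, hwwt, hwok⟩ := mem_dy_iff.mp hw
    have hk' : k < w.length := by omega
    obtain ⟨hr1, hr2⟩ := ret_mem hwwt hk'
    have hr3 : ret a b w k ≤ w.length := ret_le hwwt hk'
    rw [Finset.mem_product]
    constructor
    · rw [mem_wd_iff]
      constructor
      · dsimp only
        rw [List.length_rotate, List.length_take]
        omega
      · dsimp only
        rw [wt_rotate]; exact hr2
    · rw [mem_dy_iff]
      refine ⟨?_, ?_, ok_drop hwok hr2⟩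
      · dsimp only
        rw [List.length_drop, hwlen, heq, ← Nat.sub_mul]
      · dsimp only
        have := wt_append a b (w.take (ret a b w k)) (w.drop (ret a b w k))
        rw [List.take_append_drop] at this
        omega
  case hjj =>
    rintro ⟨Q, D⟩ hq
    dsimp only at hq ⊢
    rw [Finset.mem_product] at hq
    dsimp only at hq
    obtain ⟨hwdy, hklt, hret⟩ := backward_spec hab hj.1 hj.2 hq.1 hq.2
    rw [Finset.mem_filter, Finset.mem_product, Finset.mem_range]
    dsimp only
    refine ⟨⟨hwdy, hklt⟩, ?_⟩
    rw [hret, length_of_mem_wd hq.1, Nat.mul_div_cancel _ hab]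
  case li =>
    rintro ⟨w, k⟩ hp
    dsimp only at hp ⊢
    rw [Finset.mem_filter, Finset.mem_product, Finset.mem_range] at hp
    dsimp only at hp
    obtain ⟨⟨hw, hk⟩, -⟩ := hp
    obtain ⟨hwlen, hwwt, hwok⟩ := mem_dy_iff.mp hw
    have hk' : k < w.length := by omega
    obtain ⟨hr1, hr2⟩ := ret_mem hwwt hk'
    have hr3 : ret a b w k ≤ w.length := ret_le hwwt hk'
    have hpm := forward_pm hw hk' hr2
    have hlen : ((w.take (ret a b w k)).rotate k).length = ret a b w k := by
      rw [List.length_rotate, List.length_take]; omega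
    rw [hpm, hlen]
    rw [List.rotate_rotate]
    have h2 : k + (ret a b w k - k) = ret a b w k := by omega
    rw [h2]
    have h3 : (w.take (ret a b w k)).rotate (ret a b w k) = w.take (ret a b w k) := by
      have := List.rotate_length (w.take (ret a b w k))
      rwa [List.length_take, Nat.min_eq_left hr3] at this
    rw [h3, List.take_append_drop]
    have h4 : ret a b w k - (ret a b w k - k) = k := by omega
    rw [h4]
  case ri =>
    rintro ⟨Q, D⟩ hq
    dsimp only at hq ⊢
    rw [Finset.mem_product] at hq
    dsimp only at hq
    obtain ⟨hwdy, hklt, hret⟩ := backward_spec hab hj.1 hj.2 hq.1 hq.2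
    rw [hret]
    have h1 : 1 ≤ Q.length := by
      rw [length_of_mem_wd hq.1]
      exact Nat.one_le_iff_ne_zero.mpr (Nat.mul_ne_zero (by omega) (by omega))
    have hp1 : 1 ≤ pm a b Q := (pm_mem (a := a) (b := b) h1).1
    have hPlen : (Q.rotate (pm a b Q)).length = Q.length := List.length_rotate _ _
    have htake : (Q.rotate (pm a b Q) ++ D).take Q.length = Q.rotate (pm a b Q) := by
      rw [← hPlen, List.take_left]
    have hdrop : (Q.rotate (pm a b Q) ++ D).drop Q.length = D := by
      rw [← hPlen, List.drop_left]
    rw [htake, hdrop, List.rotate_rotate]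
    have hple : pm a b Q ≤ Q.length := (pm_mem (a := a) (b := b) h1).2.1
    have h5 : pm a b Q + (Q.length - pm a b Q) = Q.length := by omega
    rw [h5, List.rotate_length]

end count


section encode

/-- list of "number of `false`s before each `true`" -/
def toV : List Bool → List ℕ
  | [] => []
  | (true :: l) => 0 :: toV l
  | (false :: l) => (toV l).map (· + 1)

@[simp] lemma toV_length (w : List Bool) : (toV w).length = w.count true := by
  induction w with
  | nil => simp [toV]
  | cons x l ih => cases x <;> simp [toV, ih, List.count_cons]

lemma toV_sorted (w : List Bool) : (toV w).Pairwise (· ≤ ·) := by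
  induction w with
  | nil => simp [toV]
  | cons x l ih =>
    cases x
    · exact List.Pairwise.map _ (fun p q h => by omega) ih
    · exact List.pairwise_cons.mpr ⟨fun y hy => Nat.zero_le y, ih⟩

lemma toV_replicate_false (F : ℕ) : toV (List.replicate F false) = [] := by
  induction F with
  | zero => simp [toV]
  | succ F ih => rw [List.replicate_succ, toV, ih]; simp

lemma toV_inj : ∀ {w₁ w₂ : List Bool}, toV w₁ = toV w₂ → w₁.length = w₂.length →
    w₁ = w₂ := by
  intro w₁
  induction w₁ with
  | nil =>
    intro w₂ _ hlen
    exact (List.length_eq_zero_iff.mp hlen.symm).symm ▸ rfl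
  | cons x l ih =>
    intro w₂ hv hlen
    cases w₂ with
    | nil => simp at hlen
    | cons y m =>
      cases x <;> cases y
      · simp only [toV] at hv
        have h := List.map_injective_iff.mpr (fun p q (h : p + 1 = q + 1) => by omega) hv
        rw [ih h (by simpa using hlen)]
      · exfalso
        simp only [toV] at hv
        have h0 : (0 : ℕ) ∈ (toV l).map (· + 1) := by rw [hv]; exact List.mem_cons_self
        simp only [List.mem_map] at h0
        obtain ⟨p, -, hp⟩ := h0
        omega
      · exfalso
        simp only [toV] at hv
        have h0 : (0 : ℕ) ∈ (toV m).map (· + 1) := by rw [← hv]; exact List.mem_cons_self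
        simp only [List.mem_map] at h0
        obtain ⟨p, -, hp⟩ := h0
        omega
      · simp only [toV, List.cons.injEq] at hv
        rw [ih hv.2 (by simpa using hlen)]

lemma exists_word : ∀ (M : ℕ) (v : List ℕ) (F : ℕ), v.Pairwise (· ≤ ·) →
    (∀ x ∈ v, x ≤ F) → v.length + F ≤ M →
    ∃ w : List Bool, toV w = v ∧ w.count false = F ∧ w.count true = v.length := by
  intro M
  induction M with
  | zero =>
    rintro v F - - hM
    have hv : v = [] := List.length_eq_zero_iff.mp (by omega)
    have hF : F = 0 := by omega
    exact ⟨[], by simp [hv, hF, toV]⟩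
  | succ M ih =>
    rintro v F hs hb hM
    cases v with
    | nil =>
      refine ⟨List.replicate F false, toV_replicate_false F, ?_, ?_⟩ <;> simp [List.count_replicate]
    | cons x vs =>
      rcases Nat.eq_zero_or_pos x with rfl | hx
      · obtain ⟨w', h1, h2, h3⟩ := ih vs F (List.pairwise_cons.mp hs).2
          (fun y hy => hb y (List.mem_cons_of_mem _ hy)) (by simp at hM ⊢; omega)
        refine ⟨true :: w', ?_, ?_, ?_⟩
        · rw [toV, h1]
        · simpa using h2
        · simp [List.count_cons, h3]
      · have hmin : ∀ y ∈ x :: vs, x ≤ y := by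
          intro y hy
          rcases List.mem_cons.mp hy with rfl | hy
          · exact le_refl _
          · exact (List.pairwise_cons.mp hs).1 y hy
        have hF : x ≤ F := hb x (List.mem_cons_self)
        obtain ⟨w', h1, h2, h3⟩ := ih ((x :: vs).map (· - 1)) (F - 1)
          (List.Pairwise.map _ (fun p q (hpq : p ≤ q) => Nat.sub_le_sub_right hpq 1) hs)
          (fun y hy => by
            simp only [List.mem_map] at hy
            obtain ⟨z, hz, rfl⟩ := hy
            have := hb z hz
            omega)
          (by simp at hM ⊢; omega)
        refine ⟨false :: w', ?_, ?_, ?_⟩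
        · rw [toV, h1, ← List.comp_map]
          conv_rhs => rw [← List.map_id (x :: vs)]
          apply List.map_congr_left
          intro y hy
          have := hmin y hy
          simp only [Function.comp_apply, id_eq]
          omega
        · simp only [List.count_cons, h2]
          simp
          omega
        · simpa using h3

/-- Dyck condition with initial height -/
def OkH (a b : ℕ) (h : ℤ) (w : List Bool) : Prop := ∀ t, 0 ≤ h + wt a b (w.take t)

lemma okH_nil {a b : ℕ} {h : ℤ} : OkH a b h [] ↔ 0 ≤ h := by
  constructor
  · intro hk; simpa using hk 0
  · intro hk t; simpa using hk

lemma okH_cons {a b : ℕ} {h : ℤ} {x : Bool} {l : List Bool} :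
    OkH a b h (x :: l) ↔ 0 ≤ h ∧ OkH a b (h + step a b x) l := by
  constructor
  · intro hk
    refine ⟨by simpa using hk 0, fun t => ?_⟩
    have := hk (t + 1)
    rw [List.take_succ_cons, wt_cons] at this
    linarith
  · rintro ⟨h0, hk⟩ t
    cases t with
    | zero => simpa using h0
    | succ t =>
      rw [List.take_succ_cons, wt_cons]
      have := hk t
      linarith

lemma ok_iff_okH {a b : ℕ} {w : List Bool} : Ok a b w ↔ OkH a b 0 w := by
  unfold Ok OkH
  simp

/-- characterization of the Dyck condition via `toV` -/
lemma okH_iff {a b : ℕ} : ∀ (w : List Bool) (h : ℤ), OkH a b h w ↔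
    (0 ≤ h ∧ (∀ p (hp : p < (toV w).length), (a : ℤ) * ((toV w)[p]'hp) ≤ h + b * p) ∧
      0 ≤ h + wt a b w) := by
  intro w
  induction w with
  | nil =>
    intro h
    rw [okH_nil]
    simp [toV]
  | cons x l ih =>
    intro h
    rw [okH_cons, ih]
    cases x
    · -- false
      simp only [toV, step, wt_cons]
      constructor
      · rintro ⟨h0, h1, h2, h3⟩
        refine ⟨h0, ?_, ?_⟩
        · intro p hp
          rw [List.length_map] at hp
          rw [List.getElem_map]
          have := h2 p hp
          push_cast
          linarith
        · linarith
      · rintro ⟨h0, h2, h3⟩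
        have hha : (a : ℤ) ≤ h := by
          rcases Nat.eq_zero_or_pos (toV l).length with hlen | hlen
          · -- no trues in l
            have hct : l.count true = 0 := by rw [← toV_length]; omega
            have hwt : wt a b l = - (a : ℤ) * l.count false := by
              rw [wt_eq, hct]; push_cast; ring
            have hcf : (0 : ℤ) ≤ l.count false := by positivity
            have ha' : (0:ℤ) ≤ (a : ℤ) * l.count false := by positivity
            nlinarith [h3]
          · have := h2 0 (by rw [List.length_map]; omega)
            rw [List.getElem_map] at this
            have hnn : (0 : ℤ) ≤ (a : ℤ) * ((toV l)[0]'(by omega)) := by positivity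
            push_cast at this
            simp at this
            nlinarith
        refine ⟨h0, by linarith, ?_, ?_⟩
        · intro p hp
          have := h2 p (by rw [List.length_map]; omega)
          rw [List.getElem_map] at this
          push_cast at this
          linarith
        · linarith
    · -- true
      simp only [toV, step, wt_cons]
      constructor
      · rintro ⟨h0, h1, h2, h3⟩
        refine ⟨h0, ?_, ?_⟩
        · intro p hp
          cases p with
          | zero =>
            simp only [List.getElem_cons_zero]
            push_cast
            simpa using h0
          | succ p =>
            rw [List.getElem_cons_succ]
            have := h2 p (by simp only [List.length_cons] at hp; omega)
            push_cast
            push_cast at this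
            linarith
        · linarith
      · rintro ⟨h0, h2, h3⟩
        have hbnn : (0 : ℤ) ≤ (b : ℤ) := by positivity
        refine ⟨h0, by linarith, ?_, ?_⟩
        · intro p hp
          have := h2 (p + 1) (by simp only [List.length_cons]; omega)
          rw [List.getElem_cons_succ] at this
          push_cast at this
          push_cast
          linarith
        · linarith

end encode


section partB

lemma count_true_of_mem_dy {a b d : ℕ} (hab : 0 < a + b) {w : List Bool}
    (hw : w ∈ dy a b d) : w.count true = d * a := by
  obtain ⟨h1, h2, -⟩ := mem_dy_iff.mp hw
  exact (wt_eq_zero_iff hab h1).mp h2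

lemma toV_head_eq_zero {a b d : ℕ} (ha : 0 < a) {w : List Bool}
    (hw : w ∈ dy a b d) {p : ℕ} (hp : p < (toV w).length) (hp0 : p = 0) :
    (toV w)[p]'hp = 0 := by
  obtain ⟨h1, h2, h3⟩ := mem_dy_iff.mp hw
  have h4 := (okH_iff (a := a) (b := b) w 0).mp (ok_iff_okH.mp h3)
  have h5 := h4.2.1 p hp
  subst hp0
  have : (a : ℤ) * ((toV w)[0]'hp) ≤ 0 := by simpa using h5
  have hge : (0 : ℤ) ≤ ((toV w)[0]'hp : ℤ) := by positivity
  have ha' : (0 : ℤ) < (a : ℤ) := by exact_mod_cast ha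
  nlinarith

lemma wordSeq_mono {a d : ℕ} {w : List Bool} (hlen : (toV w).length = d * a) :
    Monotone (fun l : Fin (d * a - 1) => (toV w).getD (l.1 + 1) 0) := by
  intro l m hlm
  simp only
  have hl2 := l.2
  have hm2 := m.2
  have hlm' : l.1 ≤ m.1 := Fin.le_def.mp hlm
  rw [List.getD_eq_getElem _ _ (by omega), List.getD_eq_getElem _ _ (by omega)]
  refine List.SortedLE.monotone_get (List.sortedLE_iff_pairwise.mpr (toV_sorted w)) ?_
  simp only [Fin.mk_le_mk]
  omega

lemma word_toV_bound {a b d : ℕ} (hab : 0 < a + b) {w : List Bool} (hw : w ∈ dy a b d)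
    {p : ℕ} (hp : p < (toV w).length) :
    (a : ℤ) * ((toV w)[p]'hp) ≤ (b : ℤ) * p := by
  obtain ⟨h1, h2, h3⟩ := mem_dy_iff.mp hw
  have h4 := (okH_iff (a := a) (b := b) w 0).mp (ok_iff_okH.mp h3)
  have h5 := h4.2.1 p hp
  linarith

lemma wordSeq_bound {a b d : ℕ} (ha : 0 < a) (hab : 0 < a + b) (hda : 0 < d * a)
    {w : List Bool} (hw : w ∈ dy a b d) (l : Fin (d * a - 1)) :
    (toV w).getD (l.1 + 1) 0 ≤ d * b * (l.1 + 1) / (d * a) := by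
  have hlen : (toV w).length = d * a := by
    rw [toV_length]; exact count_true_of_mem_dy hab hw
  have hplt : l.1 + 1 < (toV w).length := by rw [hlen]; omega
  rw [List.getD_eq_getElem _ _ hplt]
  rw [Nat.le_div_iff_mul_le hda]
  have h5 := word_toV_bound hab hw hplt
  have h6 : a * ((toV w)[l.1 + 1]'hplt) ≤ b * (l.1 + 1) := by exact_mod_cast h5
  calc (toV w)[l.1 + 1]'hplt * (d * a)
      = d * (a * (toV w)[l.1 + 1]'hplt) := by ring
    _ ≤ d * (b * (l.1 + 1)) := Nat.mul_le_mul_left d h6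
    _ = d * b * (l.1 + 1) := by ring

lemma dyckCount_eq_card {a b : ℕ} (ha : 0 < a) (hb : 0 < b) {d : ℕ} (hd : 1 ≤ d) :
    dyckCount (d * a) (d * b) = (dy a b d).card := by
  classical
  have hab : 0 < a + b := by omega
  have hda : 0 < d * a := by positivity
  rw [← Nat.card_eq_finsetCard, dyckCount]
  have hlenV : ∀ w : List Bool, w ∈ dy a b d → (toV w).length = d * a := by
    intro w hw
    rw [toV_length]
    exact count_true_of_mem_dy hab hw
  set f : {w // w ∈ dy a b d} →
      {c : Fin (d * a - 1) → ℕ //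
        Monotone c ∧ ∀ l : Fin (d * a - 1), c l ≤ d * b * (l.1 + 1) / (d * a)} :=
    fun w => ⟨fun l => (toV w.1).getD (l.1 + 1) 0,
      wordSeq_mono (hlenV w.1 w.2), fun l => wordSeq_bound ha hab hda w.2 l⟩ with hf
  have hinj : Function.Injective f := by
    rintro ⟨w₁, hw₁⟩ ⟨w₂, hw₂⟩ heq
    simp only [hf, Subtype.mk.injEq] at heq ⊢
    have hV : toV w₁ = toV w₂ := by
      apply List.ext_getElem (by rw [hlenV _ hw₁, hlenV _ hw₂])
      intro p hp1 hp2
      rcases Nat.eq_zero_or_pos p with rfl | hp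
      · rw [toV_head_eq_zero ha hw₁ hp1 rfl, toV_head_eq_zero ha hw₂ hp2 rfl]
      · obtain ⟨q, rfl⟩ : ∃ q, p = q + 1 := ⟨p - 1, by omega⟩
        have hq : q < d * a - 1 := by
          have := hlenV _ hw₁; omega
        have := congrFun heq ⟨q, hq⟩
        simp only at this
        rwa [List.getD_eq_getElem _ _ (by omega : q + 1 < (toV w₁).length),
          List.getD_eq_getElem _ _ (by omega : q + 1 < (toV w₂).length)] at this
    apply toV_inj hV
    rw [(mem_dy_iff.mp hw₁).1, (mem_dy_iff.mp hw₂).1]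
  have hsurj : Function.Surjective f := by
    rintro ⟨c, hmono, hbound⟩
    have hvs : (0 :: List.ofFn c).Pairwise (· ≤ ·) := by
      refine List.pairwise_cons.mpr ⟨fun y hy => Nat.zero_le y, ?_⟩
      exact List.sortedLE_iff_pairwise.mp (List.sortedLE_ofFn_iff.mpr hmono)
    have hvb : ∀ x ∈ (0 :: List.ofFn c), x ≤ d * b := by
      intro x hx
      rw [List.mem_cons] at hx
      rcases hx with rfl | hx
      · exact Nat.zero_le _
      · simp only [List.mem_ofFn] at hx
        obtain ⟨l, rfl⟩ := hx
        calc c l ≤ d * b * (l.1 + 1) / (d * a) := hbound l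
          _ ≤ d * b * (d * a) / (d * a) := by
              apply Nat.div_le_div_right
              apply Nat.mul_le_mul_left
              omega
          _ = d * b := Nat.mul_div_cancel _ hda
    obtain ⟨w, hw1, hw2, hw3⟩ := exists_word ((0 :: List.ofFn c).length + d * b)
      (0 :: List.ofFn c) (d * b) hvs hvb (le_refl _)
    have hvlen : (0 :: List.ofFn c).length = d * a := by
      simp only [List.length_cons, List.length_ofFn]
      omega
    have hwlen : w.length = d * (a + b) := by
      rw [← count_true_add_count_false w, hw2, hw3, hvlen]
      ring
    have hwct : w.count true = d * a := by rw [hw3, hvlen]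
    have hwmem : w ∈ dy a b d := by
      rw [mem_dy_iff]
      refine ⟨hwlen, (wt_eq_zero_iff hab hwlen).mpr hwct, ?_⟩
      rw [ok_iff_okH, okH_iff]
      refine ⟨le_refl 0, ?_, ?_⟩
      · intro p hp
        rw [List.getElem_of_eq hw1 hp]
        rcases Nat.eq_zero_or_pos p with rfl | hp0
        · simp
        · obtain ⟨q, rfl⟩ : ∃ q, p = q + 1 := ⟨p - 1, by omega⟩
          have hq : q < d * a - 1 := by
            rw [hw1, hvlen] at hp
            omega
          have hgv : (0 :: List.ofFn c)[q + 1]'(by rw [hvlen]; omega) = c ⟨q, hq⟩ := by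
            simp [List.getElem_cons_succ, List.getElem_ofFn]
          rw [hgv]
          have hb1 := hbound ⟨q, hq⟩
          rw [Nat.le_div_iff_mul_le hda] at hb1
          have h6 : a * c ⟨q, hq⟩ ≤ b * (q + 1) := by
            have hmul : d * (a * c ⟨q, hq⟩) ≤ d * (b * (q + 1)) := by
              calc d * (a * c ⟨q, hq⟩) = c ⟨q, hq⟩ * (d * a) := by ring
                _ ≤ d * b * (q + 1) := hb1
                _ = d * (b * (q + 1)) := by ring
            exact Nat.le_of_mul_le_mul_left hmul (by omega)
          have h7 : ((a : ℤ)) * (c ⟨q, hq⟩ : ℤ) ≤ (b : ℤ) * ((q : ℤ) + 1) := by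
            exact_mod_cast h6
          push_cast
          linarith
      · rw [(wt_eq_zero_iff hab hwlen).mpr hwct]
        norm_num
    refine ⟨⟨w, hwmem⟩, ?_⟩
    apply Subtype.ext
    simp only [hf]
    funext l
    have hplt : l.1 + 1 < (toV w).length := by rw [hlenV w hwmem]; omega
    rw [List.getD_eq_getElem _ _ hplt, List.getElem_of_eq hw1 hplt]
    simp [List.getElem_cons_succ, List.getElem_ofFn]
  exact Nat.card_congr (Equiv.ofBijective f ⟨hinj, hsurj⟩).symm

end partB


section partD

open PowerSeries

lemma coeff_pow_eq_zero {f : PowerSeries ℚ} (hf : constantCoeff (R := ℚ) f = 0)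
    {m n : ℕ} (h : n < m) : coeff (R := ℚ) n (f ^ m) = 0 :=
  (PowerSeries.X_pow_dvd_iff.mp (pow_dvd_pow_of_dvd (PowerSeries.X_dvd_iff.mpr hf) m)) n h

lemma coeff_expOf {f : PowerSeries ℚ} (hf : constantCoeff (R := ℚ) f = 0)
    {n M : ℕ} (h : n ≤ M) :
    coeff (R := ℚ) n (expOf f) =
      ∑ m ∈ Finset.range (M + 1), (m.factorial : ℚ)⁻¹ * coeff (R := ℚ) n (f ^ m) := by
  rw [expOf, coeff_mk, map_sum]
  have hsub : Finset.range (n + 1) ⊆ Finset.range (M + 1) :=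
    Finset.range_subset_range.mpr (by omega)
  rw [Finset.sum_subset hsub]
  · apply Finset.sum_congr rfl
    intro m hm
    rw [coeff_smul, smul_eq_mul]
  · intro m hm hnm
    rw [Finset.mem_range] at hm hnm
    rw [coeff_smul, smul_eq_mul, coeff_pow_eq_zero hf (by omega), mul_zero]

lemma coeff_expOf_zero {f : PowerSeries ℚ} : coeff (R := ℚ) 0 (expOf f) = 1 := by
  rw [expOf, coeff_mk]
  simp

lemma expOf_rec {f : PowerSeries ℚ} (hf : constantCoeff (R := ℚ) f = 0) (n : ℕ) :
    ((n : ℚ) + 1) * coeff (R := ℚ) (n + 1) (expOf f) =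
      ∑ i ∈ Finset.range (n + 1), coeff (R := ℚ) i (expOf f) *
        ((((n - i : ℕ) : ℚ) + 1) * coeff (R := ℚ) (n - i + 1) f) := by
  have h1 : coeff (R := ℚ) (n + 1) (expOf f) =
      ∑ m ∈ Finset.range (n + 2), (m.factorial : ℚ)⁻¹ * coeff (R := ℚ) (n + 1) (f ^ m) :=
    coeff_expOf hf (by omega)
  rw [h1, Finset.mul_sum]
  have h2 : ∀ m : ℕ, ((n : ℚ) + 1) * ((m.factorial : ℚ)⁻¹ * coeff (R := ℚ) (n + 1) (f ^ m)) =
      (m.factorial : ℚ)⁻¹ * coeff (R := ℚ) n ((PowerSeries.derivative ℚ) (f ^ m)) := by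
    intro m
    rw [PowerSeries.coeff_derivative]
    push_cast
    ring
  simp only [h2]
  have h3 : ∀ m : ℕ, (PowerSeries.derivative ℚ) (f ^ m) =
      m • (f ^ (m - 1) * (PowerSeries.derivative ℚ) f) := by
    intro m
    rw [Derivation.leibniz_pow]
    rw [smul_eq_mul]
  simp only [h3]
  have h4 : ∀ m : ℕ, (m.factorial : ℚ)⁻¹ *
      coeff (R := ℚ) n (m • (f ^ (m - 1) * (PowerSeries.derivative ℚ) f)) =
      if m = 0 then 0 else
        (((m - 1 : ℕ).factorial : ℚ))⁻¹ * coeff (R := ℚ) n (f ^ (m - 1) * (PowerSeries.derivative ℚ) f) := by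
    intro m
    cases m with
    | zero => simp
    | succ m =>
      rw [if_neg (by omega)]
      rw [map_nsmul, nsmul_eq_mul, Nat.add_sub_cancel]
      have hm : ((m + 1).factorial : ℚ) = ((m + 1 : ℕ) : ℚ) * (m.factorial : ℚ) := by
        rw [Nat.factorial_succ]; push_cast; ring
      rw [hm]
      have h5 : ((m + 1 : ℕ) : ℚ) ≠ 0 := by positivity
      have h6 : ((m.factorial : ℚ)) ≠ 0 := by
        exact_mod_cast Nat.factorial_ne_zero m
      field_simp
  simp only [h4]
  rw [Finset.sum_range_succ']
  simp only [Nat.succ_ne_zero, if_neg, if_pos, Nat.add_sub_cancel, reduceIte, add_zero]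
  have h7 : ∑ i ∈ Finset.range (n + 1),
        (i.factorial : ℚ)⁻¹ * coeff (R := ℚ) n (f ^ i * (PowerSeries.derivative ℚ) f)
      = coeff (R := ℚ) n ((∑ i ∈ Finset.range (n + 1), (i.factorial : ℚ)⁻¹ • f ^ i) *
          (PowerSeries.derivative ℚ) f) := by
    rw [Finset.sum_mul, map_sum]
    apply Finset.sum_congr rfl
    intro i hi
    rw [smul_mul_assoc, coeff_smul, smul_eq_mul]
  rw [h7, PowerSeries.coeff_mul, Finset.Nat.sum_antidiagonal_eq_sum_range_succ_mk]
  apply Finset.sum_congr rfl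
  intro i hi
  rw [Finset.mem_range] at hi
  have h8 : coeff (R := ℚ) i (∑ m ∈ Finset.range (n + 1), (m.factorial : ℚ)⁻¹ • f ^ m)
      = coeff (R := ℚ) i (expOf f) := by
    rw [coeff_expOf hf (by omega : i ≤ n), map_sum]
    apply Finset.sum_congr rfl
    intro m hm
    rw [coeff_smul, smul_eq_mul]
  rw [h8, PowerSeries.coeff_derivative]
  ring

lemma eq_expOf {f G : PowerSeries ℚ} (hf : constantCoeff (R := ℚ) f = 0)
    (h0 : coeff (R := ℚ) 0 G = 1)
    (hrec : ∀ n : ℕ, ((n : ℚ) + 1) * coeff (R := ℚ) (n + 1) G =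
      ∑ i ∈ Finset.range (n + 1), coeff (R := ℚ) i G *
        ((((n - i : ℕ) : ℚ) + 1) * coeff (R := ℚ) (n - i + 1) f)) :
    G = expOf f := by
  ext n
  induction n using Nat.strong_induction_on with
  | _ n ih =>
    cases n with
    | zero => rw [h0, coeff_expOf_zero]
    | succ n =>
      have h1 := hrec n
      have h2 := expOf_rec hf n
      have h3 : ∑ i ∈ Finset.range (n + 1), coeff (R := ℚ) i G *
          ((((n - i : ℕ) : ℚ) + 1) * coeff (R := ℚ) (n - i + 1) f) =
          ∑ i ∈ Finset.range (n + 1), coeff (R := ℚ) i (expOf f) *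
            ((((n - i : ℕ) : ℚ) + 1) * coeff (R := ℚ) (n - i + 1) f) := by
        apply Finset.sum_congr rfl
        intro i hi
        rw [Finset.mem_range] at hi
        rw [ih i (by omega)]
      have hne : ((n : ℚ) + 1) ≠ 0 := by positivity
      apply mul_left_cancel₀ hne
      rw [h1, h2, h3]

end partD

end Bizley

theorem bizley_formula (a b : ℕ) (ha : 0 < a) (hb : 0 < b) (h : Nat.gcd a b = 1) :
    (1 : PowerSeries ℚ) +
        PowerSeries.mk (fun d => if d = 0 then 0 else (dyckCount (d * a) (d * b) : ℚ)) =
      expOf (PowerSeries.mk fun j =>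
        if j = 0 then 0 else ((j * (a + b)).choose (j * a) : ℚ) / ((j * (a + b) : ℕ) : ℚ)) := by
  classical
  have hab : 0 < a + b := by omega
  have habQ : ((a : ℚ) + b) ≠ 0 := by positivity
  have hco : Nat.Coprime (a + b) a := by
    have hc : Nat.Coprime b a := Nat.coprime_comm.mp h
    have := Nat.coprime_add_self_left.mpr hc
    rwa [Nat.add_comm] at this
  apply Bizley.eq_expOf
  · rw [PowerSeries.constantCoeff_mk]
    simp
  · rw [map_add, PowerSeries.coeff_one, PowerSeries.coeff_mk]
    simp
  · intro n
    have hG : ∀ m : ℕ, PowerSeries.coeff (R := ℚ) m ((1 : PowerSeries ℚ) +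
        PowerSeries.mk (fun d => if d = 0 then 0 else (dyckCount (d * a) (d * b) : ℚ))) =
        ((Bizley.dy a b m).card : ℚ) := by
      intro m
      rw [map_add, PowerSeries.coeff_one, PowerSeries.coeff_mk]
      cases m with
      | zero => rw [Bizley.dy_zero]; simp
      | succ m =>
        rw [if_neg (by omega), if_neg (by omega), zero_add,
          Bizley.dyckCount_eq_card ha hb (by omega : 1 ≤ m + 1)]
    rw [hG (n + 1)]
    have hterm : ∀ i ∈ Finset.range (n + 1),
        PowerSeries.coeff (R := ℚ) i ((1 : PowerSeries ℚ) +
          PowerSeries.mk (fun d => if d = 0 then 0 else (dyckCount (d * a) (d * b) : ℚ))) *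
          ((((n - i : ℕ) : ℚ) + 1) * PowerSeries.coeff (R := ℚ) (n - i + 1) (PowerSeries.mk fun j =>
            if j = 0 then 0 else ((j * (a + b)).choose (j * a) : ℚ) / ((j * (a + b) : ℕ) : ℚ))) =
          ((Bizley.dy a b i).card : ℚ) *
            ((((n - i + 1) * (a + b)).choose ((n - i + 1) * a) : ℚ) * ((a : ℚ) + b)⁻¹) := by
      intro i hi
      rw [Finset.mem_range] at hi
      rw [hG i, PowerSeries.coeff_mk, if_neg (by omega)]
      congr 1
      have hj : (((n - i : ℕ) : ℚ) + 1) = ((n - i + 1 : ℕ) : ℚ) := by push_cast; ring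
      rw [hj]
      have hjne : ((n - i + 1 : ℕ) : ℚ) ≠ 0 := by positivity
      have hcast : (((n - i + 1) * (a + b) : ℕ) : ℚ) =
          ((n - i + 1 : ℕ) : ℚ) * ((a : ℚ) + b) := by push_cast; ring
      rw [hcast]
      field_simp
    rw [Finset.sum_congr rfl hterm]
    have key := Bizley.key_identity ha hco (n + 1)
    have keyQ : ((Bizley.dy a b (n + 1)).card : ℚ) * (((n + 1 : ℕ) : ℚ) * ((a : ℚ) + b)) =
        ∑ j ∈ Finset.Icc 1 (n + 1),
          (((j * (a + b)).choose (j * a) : ℕ) : ℚ) * ((Bizley.dy a b (n + 1 - j)).card : ℚ) := by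
      have := congrArg (fun x : ℕ => (x : ℚ)) key
      push_cast at this ⊢
      convert this using 2 <;> ring
    have hre : ∑ i ∈ Finset.range (n + 1),
        ((Bizley.dy a b i).card : ℚ) *
          ((((n - i + 1) * (a + b)).choose ((n - i + 1) * a) : ℚ) * ((a : ℚ) + b)⁻¹) =
        (∑ j ∈ Finset.Icc 1 (n + 1),
          (((j * (a + b)).choose (j * a) : ℕ) : ℚ) * ((Bizley.dy a b (n + 1 - j)).card : ℚ)) *
          ((a : ℚ) + b)⁻¹ := by
      rw [Finset.sum_mul]
      refine Finset.sum_bij' (i := fun i _ => n + 1 - i) (j := fun j _ => n + 1 - j)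
        ?_ ?_ ?_ ?_ ?_
      · intro i hi
        rw [Finset.mem_range] at hi
        beta_reduce
        rw [Finset.mem_Icc]
        omega
      · intro j hj
        rw [Finset.mem_Icc] at hj
        beta_reduce
        rw [Finset.mem_range]
        omega
      · intro i hi
        rw [Finset.mem_range] at hi
        beta_reduce
        omega
      · intro j hj
        rw [Finset.mem_Icc] at hj
        beta_reduce
        omega
      · intro i hi
        rw [Finset.mem_range] at hi
        beta_reduce
        have e1 : n - i + 1 = n + 1 - i := by omega
        have e2 : n + 1 - (n + 1 - i) = i := by omega
        rw [e1, e2]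
        ring
    rw [hre, ← keyQ]
    field_simp
    push_cast
    ring
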